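/- For the cubic f(t₁) = kt₁³ − 2kt·t₁² + (kt² + x − y)t₁ + yt with x = 0: the discriminant vanishes exactly when y = −kt²/4, and in that case the double root is t₁ = t/2, satisfying y = −kt₁². -/

import Mathlib

/-- Axis caustic for the linear wall (`x = 0`): the discriminant condition
`-kt²y²/4 - y³ = 0` holds iff `y = -kt²/4`, and then `t₁ = t/2` is a double root of the
cubic `f(t₁) = kt₁³ - 2kt t₁² + (kt² - y)t₁ + yt`, with `y = -k t₁²`. -/
theorem stmt_19 (k t y : ℝ) (hk : 0 < k) (ht : 0 < t) (hy : y < 0) :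
    let f : ℝ → ℝ := fun t₁ => k * t₁^3 - 2 * k * t * t₁^2 + (k * t^2 - y) * t₁ + y * t
    ((-k * t^2 * y^2 / 4 - y^3 = 0) ↔ y = -k * t^2 / 4) ∧
    (y = -k * t^2 / 4 →
      f (t / 2) = 0 ∧ deriv f (t / 2) = 0 ∧ y = -k * (t / 2)^2) := by
  intro f
  have hy0 : y ≠ 0 := ne_of_lt hy
  constructor
  · constructor
    · intro h
      have : y^2 * (-k * t^2 / 4 - y) = 0 := by ring_nf; ring_nf at h; linarith
      rcases mul_eq_zero.1 this with h1 | h1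
      · exact absurd (pow_eq_zero_iff (two_ne_zero)|>.1 h1) hy0
      · linarith
    · intro h; rw [h]; ring
  · intro h
    have hderiv : ∀ x : ℝ, deriv f x = 3 * k * x^2 - 4 * k * t * x + (k * t^2 - y) := by
      intro x
      have : HasDerivAt f (3 * k * x^2 - 4 * k * t * x + (k * t^2 - y)) x := by
        have h1 := (((((hasDerivAt_pow 3 x).const_mul k).sub
            ((hasDerivAt_pow 2 x).const_mul (2 * k * t))).add
            ((hasDerivAt_id x).const_mul (k * t^2 - y))).add_const (y * t))
        convert h1 using 2 <;> (try rfl) <;> simp <;> ring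
      exact this.deriv
    refine ⟨?_, ?_, ?_⟩
    · show k * (t/2)^3 - 2 * k * t * (t/2)^2 + (k * t^2 - y) * (t/2) + y * t = 0
      rw [h]; ring
    · rw [hderiv (t/2), h]; ring
    · rw [h]; ring
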